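/- If S ⊆ ℝ^d is a nonempty compact set, then F_min(S) is compact. -/

import Mathlib

/-- `Fmin S` is the set of componentwise minima of finite nonempty subsets of `S`. -/
def Fmin (d : ℕ) (S : Set (Fin d → ℝ)) : Set (Fin d → ℝ) :=
  { x | ∃ P : Finset (Fin d → ℝ), ∃ hP : P.Nonempty,
      ↑P ⊆ S ∧ x = fun i => P.inf' hP (fun p => p i) }

theorem Fmin_isCompact (d : ℕ) (S : Set (Fin d → ℝ))
    (hS : IsCompact S) (hne : S.Nonempty) :
    IsCompact (Fmin d S) := by
  rcases Nat.eq_zero_or_pos d with rfl | hd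
  · -- the whole space is a subsingleton, hence `Fmin` is finite
    have : (Fmin 0 S).Subsingleton := fun x _ y _ => Subsingleton.elim x y
    exact this.finite.isCompact
  · have hFin : Nonempty (Fin d) := ⟨⟨0, hd⟩⟩
    set Φ : (Fin d → Fin d → ℝ) → Fin d → ℝ :=
      fun g i => Finset.univ.inf' Finset.univ_nonempty (fun j => g j i) with hΦ
    have himg : Fmin d S = Φ '' (Set.univ.pi fun _ : Fin d => S) := by
      ext x
      constructor
      · rintro ⟨P, hP, hPS, rfl⟩
        -- choose for each coordinate a point achieving the minimum
        choose g hgP hg using fun i => P.exists_mem_eq_inf' hP (fun p => p i)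
        refine ⟨g, fun i _ => hPS (hgP i), ?_⟩
        funext i
        rw [hΦ]
        apply le_antisymm
        · exact Finset.inf'_le _ (Finset.mem_univ i) |>.trans_eq (hg i).symm
        · rw [Finset.le_inf'_iff]
          intro j _
          exact Finset.inf'_le _ (hgP j)
      · rintro ⟨g, hg, rfl⟩
        refine ⟨Finset.univ.image g, ⟨g (Classical.arbitrary _), Finset.mem_image_of_mem _ (Finset.mem_univ _)⟩, ?_, ?_⟩
        · intro p hp
          simp only [Finset.coe_image, Set.mem_image] at hp
          rcases hp with ⟨j, _, rfl⟩
          exact hg j (Set.mem_univ j)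
        · funext i
          rw [hΦ]
          exact (Finset.inf'_image (s := (Finset.univ : Finset (Fin d))) (f := g) (g := fun p : Fin d → ℝ => p i) ..).symm
    rw [himg]
    refine ((isCompact_univ_pi fun _ => hS).image ?_)
    refine continuous_pi fun i => ?_
    have heq : (fun g : Fin d → Fin d → ℝ => Φ g i)
        = Finset.univ.inf' Finset.univ_nonempty
            (fun j (g : Fin d → Fin d → ℝ) => g j i) := by
      funext g; rw [hΦ, Finset.inf'_apply]
    rw [heq]
    exact Continuous.finset_inf' Finset.univ_nonempty
      fun j _ => (continuous_apply i).comp (continuous_apply j)
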